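/- arXiv:math/9904162 — 2 statements merged into one kernel-verified Lean document; each statement's English description precedes it below -/
import Mathlib

section
/- For all positive integers m and n, the maps g_m and g_n commute: g_m ∘ g_n = g_n ∘ g_m on [0,1]. -/
open Set

noncomputable def vmap (t : ℝ) : ℝ :=
  if Even ⌊t⌋ then t - ⌊t⌋ else ⌊t⌋ + 1 - t

noncomputable def gmap (n : ℕ) (t : ℝ) : ℝ := vmap (n * t)

def Knaster (n : ℕ → ℕ) : Set (ℕ → ℝ) :=
  {x | (∀ j, x j ∈ Icc (0:ℝ) 1) ∧ ∀ j, x j = gmap (n j) (x (j + 1))}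

lemma vmap_add_two_int (t : ℝ) (k : ℤ) : vmap (t + 2 * k) = vmap t := by
  have hfl : ⌊t + 2 * (k : ℝ)⌋ = ⌊t⌋ + 2 * k := by
    rw [show (2 * (k : ℝ)) = ((2 * k : ℤ) : ℝ) by push_cast; ring, Int.floor_add_intCast]
  have hev : Even (⌊t⌋ + 2 * k) ↔ Even ⌊t⌋ := by
    constructor
    · intro h; have := h.sub (even_two_mul k); simpa using this
    · intro h; exact h.add (even_two_mul k)
  unfold vmap
  rw [hfl]
  by_cases h : Even ⌊t⌋
  · rw [if_pos (hev.mpr h), if_pos h]; push_cast; ring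
  · rw [if_neg (fun hh => h (hev.mp hh)), if_neg h]; push_cast; ring

lemma vmap_neg (t : ℝ) : vmap (-t) = vmap t := by
  by_cases hint : ∃ k : ℤ, t = k
  · obtain ⟨k, rfl⟩ := hint
    unfold vmap
    rw [show (-(k:ℝ)) = ((-k : ℤ) : ℝ) by push_cast; ring, Int.floor_intCast,
      Int.floor_intCast]
    by_cases h : Even k
    · rw [if_pos h.neg, if_pos h]; push_cast; ring
    · rw [if_neg (fun hh => h (by simpa using hh.neg)), if_neg h]; push_cast; ring
  · have hfr : Int.fract t ≠ 0 := by
      intro h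
      exact hint ⟨⌊t⌋, by have := Int.fract_add_floor t; linarith [this]⟩
    have hlt : (⌊t⌋ : ℝ) < t := by
      rcases lt_or_eq_of_le (Int.floor_le t) with h | h
      · exact h
      · exact absurd ⟨⌊t⌋, h.symm⟩ hint
    have hfl : ⌊-t⌋ = -⌊t⌋ - 1 := by
      rw [Int.floor_eq_iff]
      constructor
      · push_cast
        linarith [Int.lt_floor_add_one t]
      · push_cast
        linarith
    unfold vmap
    rw [hfl]
    by_cases h : Even ⌊t⌋
    · rw [if_neg, if_pos h]
      · push_cast; ring
      · simpa [Int.even_sub, parity_simps] using h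
    · rw [if_pos, if_neg h]
      · push_cast; ring
      · simpa [Int.even_sub, parity_simps] using h

lemma vmap_mul_vmap (m : ℕ) (t : ℝ) : vmap (m * vmap t) = vmap (m * t) := by
  by_cases h : Even ⌊t⌋
  · obtain ⟨k, hk⟩ := h
    have : (m : ℝ) * vmap t = m * t + 2 * ((-(m * k) : ℤ) : ℝ) := by
      unfold vmap
      rw [if_pos ⟨k, hk⟩, hk]
      push_cast; ring
    rw [this, vmap_add_two_int]
  · obtain ⟨k, hk⟩ := Int.not_even_iff_odd.mp h
    have : (m : ℝ) * vmap t = -(m * t) + 2 * ((m * (k + 1) : ℤ) : ℝ) := by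
      unfold vmap
      rw [if_neg h, hk]
      push_cast; ring
    rw [this, vmap_add_two_int, vmap_neg]

theorem gmap_commute (m n : ℕ) (hm : 0 < m) (hn : 0 < n) :
    ∀ t ∈ Set.Icc (0:ℝ) 1, gmap m (gmap n t) = gmap n (gmap m t) := by
  intro t _
  unfold gmap
  rw [vmap_mul_vmap, vmap_mul_vmap, ← mul_assoc, ← mul_assoc, mul_comm (m:ℝ) (n:ℝ)]
end

section
/- Let K₁ and K₂ be Knaster continua, and let g, f : K₁ → K₂ be two naturally induced maps such that their compositions with the projection of K₂ onto the 0-th coordinate agree: π″₀ ∘ g = π″₀ ∘ f. Then g = f. -/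
open Set

lemma vmap_mem (t : ℝ) : vmap t ∈ Icc (0:ℝ) 1 := by
  unfold vmap
  have h1 := Int.floor_le t
  have h2 := Int.lt_floor_add_one t
  split <;> constructor <;> linarith

lemma vmap_of_mem {t : ℝ} (h : t ∈ Icc (0:ℝ) 1) : vmap t = t := by
  obtain ⟨h0, h1⟩ := h
  rcases lt_or_eq_of_le h1 with h1 | rfl
  · have hf : ⌊t⌋ = 0 := Int.floor_eq_zero_iff.mpr ⟨h0, h1⟩
    unfold vmap
    rw [hf]
    norm_num
  · norm_num [vmap]

lemma vmap_int_add (t : ℝ) {m : ℤ} (hm : Even m) : vmap (t + m) = vmap t := by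
  unfold vmap
  rw [Int.floor_add_intCast]
  have hiff : Even (⌊t⌋ + m) ↔ Even ⌊t⌋ := by
    rw [Int.even_add]
    simp [hm]
  by_cases he : Even ⌊t⌋
  · rw [if_pos (hiff.mpr he), if_pos he]
    push_cast
    ring
  · rw [if_neg (fun hc => he (hiff.mp hc)), if_neg he]
    push_cast
    ring

lemma vmap_nat_mul (n : ℕ) (s : ℝ) : vmap (n * vmap s) = vmap (n * s) := by
  by_cases he : Even ⌊s⌋
  · have hv : vmap s = s - ⌊s⌋ := if_pos he
    rw [hv]
    have h1 : (n : ℝ) * (s - ⌊s⌋) = n * s + ((-((n : ℤ) * ⌊s⌋) : ℤ) : ℝ) := by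
      push_cast; ring
    rw [h1, vmap_int_add]
    exact (even_neg).mpr (he.mul_left _)
  · have hv : vmap s = ⌊s⌋ + 1 - s := if_neg he
    rw [hv]
    set m : ℤ := (n : ℤ) * (⌊s⌋ + 1) with hmdef
    have h1 : (n : ℝ) * ((⌊s⌋ : ℝ) + 1 - s) = -(n * s) + (m : ℝ) := by
      rw [hmdef]; push_cast; ring
    rw [h1, vmap_int_add _ (Even.mul_left (Int.even_add_one.mpr he) _), vmap_neg]

lemma gmap_comp (a b : ℕ) (t : ℝ) : gmap a (gmap b t) = gmap (a * b) t := by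
  unfold gmap
  rw [vmap_nat_mul]
  congr 1
  push_cast
  ring

lemma gmap_mem (n : ℕ) (t : ℝ) : gmap n t ∈ Icc (0:ℝ) 1 := vmap_mem _

lemma knaster_proj {n : ℕ → ℕ} {x : ℕ → ℝ} (hx : x ∈ Knaster n) :
    ∀ j J, j ≤ J → x j = gmap (∏ i ∈ Finset.Ico j J, n i) (x J) := by
  intro j J hjJ
  induction J, hjJ using Nat.le_induction with
  | base =>
    rw [Finset.Ico_self, Finset.prod_empty]
    unfold gmap
    rw [Nat.cast_one, one_mul]
    exact (vmap_of_mem (hx.1 j)).symm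
  | succ J hJ ih =>
    rw [ih, Finset.prod_Ico_succ_top hJ, ← gmap_comp, ← hx.2 J]

lemma prod_pos_of_gt_one {n : ℕ → ℕ} (hn : ∀ j, 1 < n j) (s : Finset ℕ) :
    0 < ∏ i ∈ s, n i :=
  Finset.prod_pos (fun i _ => lt_trans one_pos (hn i))

lemma knaster_surj (n : ℕ → ℕ) (hn : ∀ j, 1 < n j) (J : ℕ) (t : ℝ)
    (ht : t ∈ Icc (0:ℝ) 1) : ∃ x ∈ Knaster n, x J = t := by
  classical
  set Q : ℕ → ℕ := fun j => ∏ i ∈ Finset.Ico J j, n i with hQ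
  have hQpos : ∀ j, 0 < Q j := fun j => prod_pos_of_gt_one hn _
  have hdivmem : ∀ j, t / Q j ∈ Icc (0:ℝ) 1 := by
    intro j
    have h1 : (1:ℝ) ≤ Q j := by exact_mod_cast hQpos j
    constructor
    · exact div_nonneg ht.1 (by linarith)
    · rw [div_le_one (by linarith)]
      linarith [ht.2]
  refine ⟨fun j => if j ≤ J then gmap (∏ i ∈ Finset.Ico j J, n i) t else t / (Q j),
    ⟨?_, ?_⟩, ?_⟩
  · intro j
    by_cases h : j ≤ J
    · simpa [h] using gmap_mem (∏ i ∈ Finset.Ico j J, n i) t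
    · simpa [h] using hdivmem j
  · intro j
    by_cases h : j + 1 ≤ J
    · have hj : j ≤ J := le_of_lt h
      simp only [if_pos hj, if_pos h]
      rw [gmap_comp, Finset.prod_eq_prod_Ico_succ_bot h]
    · by_cases h2 : j ≤ J
      · have hj : j = J := le_antisymm h2 (by omega)
        subst hj
        simp only [le_refl, if_pos, if_neg h]
        rw [Finset.Ico_self, Finset.prod_empty]
        have hQ1 : Q (j + 1) = n j := by
          rw [hQ]
          simp [Finset.prod_Ico_succ_top (le_refl j)]
        rw [hQ1]
        unfold gmap
        rw [Nat.cast_one, one_mul, vmap_of_mem ht]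
        have hne : (n j : ℝ) ≠ 0 := by
          have := hn j; positivity
        rw [mul_div_cancel₀ t hne, vmap_of_mem ht]
      · simp only [if_neg h2, if_neg h]
        have hJj : J ≤ j := by omega
        have hQs : Q (j + 1) = Q j * n j := by
          rw [hQ]; simp [Finset.prod_Ico_succ_top hJj]
        rw [hQs]
        unfold gmap
        have hne : (n j : ℝ) ≠ 0 := by have := hn j; positivity
        have hQne : (Q j : ℝ) ≠ 0 := by have := hQpos j; positivity
        have : (n j : ℝ) * (t / (↑(Q j * n j))) = t / Q j := by
          rw [Nat.cast_mul]
          field_simp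
        rw [this, vmap_of_mem (hdivmem j)]
  · simp only [le_refl, if_pos]
    rw [Finset.Ico_self, Finset.prod_empty]
    unfold gmap
    rw [Nat.cast_one, one_mul, vmap_of_mem ht]

lemma gmap_deg_lt {A B : ℕ} (hA : 0 < A) (hAB : A < B)
    (h : ∀ t ∈ Icc (0:ℝ) 1, gmap A t = gmap B t) : False := by
  have hB0 : (0:ℝ) < B := by exact_mod_cast lt_trans hA hAB
  have htmem : (1 / B : ℝ) ∈ Icc (0:ℝ) 1 := by
    constructor
    · positivity
    · rw [div_le_one hB0]
      exact_mod_cast Nat.one_le_iff_ne_zero.mpr (by omega)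
  have hBeq : gmap B (1 / B) = 1 := by
    unfold gmap
    rw [mul_one_div, div_self (ne_of_gt hB0)]
    exact vmap_of_mem ⟨zero_le_one, le_refl 1⟩
  have hABlt : (A : ℝ) / B < 1 := by
    rw [div_lt_one hB0]
    exact_mod_cast hAB
  have hAeq : gmap A (1 / B) = A / B := by
    unfold gmap
    rw [mul_one_div]
    exact vmap_of_mem ⟨by positivity, le_of_lt hABlt⟩
  have := h (1 / B) htmem
  rw [hAeq, hBeq] at this
  linarith

lemma gmap_deg_inj {A B : ℕ} (hA : 0 < A) (hB : 0 < B)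
    (h : ∀ t ∈ Icc (0:ℝ) 1, gmap A t = gmap B t) : A = B := by
  rcases lt_trichotomy A B with hlt | he | hgt
  · exact absurd h (fun hh => gmap_deg_lt hA hlt hh)
  · exact he
  · exact absurd (fun t ht => (h t ht).symm) (fun hh => gmap_deg_lt hB hgt hh)

theorem naturally_induced_unique (nseq mseq : ℕ → ℕ)
    (hn : ∀ j, 1 < nseq j) (hm : ∀ j, 1 < mseq j)
    (iseq jseq iseq' jseq' : ℕ → ℕ)
    (hi : ∀ k, 0 < iseq k) (hj : StrictMono jseq)
    (hi' : ∀ k, 0 < iseq' k) (hj' : StrictMono jseq')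
    (hind : ∀ x ∈ Knaster nseq,
      (fun k => gmap (iseq k) (x (jseq k))) ∈ Knaster mseq)
    (hind' : ∀ x ∈ Knaster nseq,
      (fun k => gmap (iseq' k) (x (jseq' k))) ∈ Knaster mseq)
    (h0 : ∀ x ∈ Knaster nseq, gmap (iseq 0) (x (jseq 0)) = gmap (iseq' 0) (x (jseq' 0))) :
    ∀ x ∈ Knaster nseq, ∀ k, gmap (iseq k) (x (jseq k)) = gmap (iseq' k) (x (jseq' k)) := by
  intro x hx k
  set J := max (jseq k) (jseq' k) with hJ
  set P := ∏ i ∈ Finset.Ico (jseq k) J, nseq i with hP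
  set P' := ∏ i ∈ Finset.Ico (jseq' k) J, nseq i with hP'
  set M := ∏ i ∈ Finset.Ico 0 k, mseq i with hM
  have hMpos : 0 < M := prod_pos_of_gt_one hm _
  have hPpos : 0 < P := prod_pos_of_gt_one hn _
  have hP'pos : 0 < P' := prod_pos_of_gt_one hn _
  have hdeg : M * (iseq k * P) = M * (iseq' k * P') := by
    apply gmap_deg_inj (Nat.mul_pos hMpos (Nat.mul_pos (hi k) hPpos))
      (Nat.mul_pos hMpos (Nat.mul_pos (hi' k) hP'pos))
    intro t ht
    obtain ⟨z, hz, hzJ⟩ := knaster_surj nseq hn J t ht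
    have hy := hind z hz
    have hy' := hind' z hz
    have e1 : gmap (M * (iseq k * P)) t = gmap (iseq 0) (z (jseq 0)) := by
      rw [← gmap_comp, ← gmap_comp, ← hzJ, ← knaster_proj hz (jseq k) J (le_max_left _ _)]
      exact (knaster_proj hy 0 k (Nat.zero_le k)).symm
    have e2 : gmap (M * (iseq' k * P')) t = gmap (iseq' 0) (z (jseq' 0)) := by
      rw [← gmap_comp, ← gmap_comp, ← hzJ, ← knaster_proj hz (jseq' k) J (le_max_right _ _)]
      exact (knaster_proj hy' 0 k (Nat.zero_le k)).symm
    rw [e1, e2, h0 z hz]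
  have hdeg2 : iseq k * P = iseq' k * P' :=
    Nat.eq_of_mul_eq_mul_left hMpos hdeg
  calc gmap (iseq k) (x (jseq k))
      = gmap (iseq k * P) (x J) := by
        rw [← gmap_comp, ← knaster_proj hx (jseq k) J (le_max_left _ _)]
    _ = gmap (iseq' k * P') (x J) := by rw [hdeg2]
    _ = gmap (iseq' k) (x (jseq' k)) := by
        rw [← gmap_comp, ← knaster_proj hx (jseq' k) J (le_max_right _ _)]
end
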